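/- Let n ≥ 2, let ξ ∈ S^n, let v ∈ ℝ^{n+1} be a unit vector with ⟨v, ξ⟩ = 0, and let z ∈ S^n with z ≠ ξ. Let (b_k) and (c_k) be sequences in S^n such that for every k the points z, b_k, c_k are pairwise distinct, b_k → ξ, c_k → ξ, and (c_k − b_k)/‖c_k − b_k‖ → v as k → ∞. Let C_k be the unique circle in S^n through z, b_k, c_k. Then C_k converges (in Hausdorff distance) to the unique circle C in S^n through z and ξ to which v is tangent at ξ. (This is the convergence claim 'C_k converges to the unique circle passing through z₁ and tangent to v₁, which must be C' in the proof of the paper's Theorem 3.1.) -/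

import Mathlib

open Metric Set InnerProductSpace

noncomputable section

/-- `Euc k` is the Euclidean space `ℝ^{k+1}`. -/
abbrev Euc (k : ℕ) : Type := EuclideanSpace ℝ (Fin (k+1))

/-- The unit sphere `S^k ⊆ ℝ^{k+1}`. -/
def unitSphere (k : ℕ) : Set (Euc k) := Metric.sphere 0 1

/-- A circle in `S^n`: the intersection of `S^n` with a 2-dimensional affine
subspace of `ℝ^{n+1}`, provided this intersection is infinite. -/
def IsCircle (n : ℕ) (C : Set (Euc n)) : Prop :=
  ∃ P : AffineSubspace ℝ (Euc n),
    Module.finrank ℝ P.direction = 2 ∧ C = unitSphere n ∩ (P : Set (Euc n)) ∧ C.Infinite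

/-- A codimension-one sphere in `S^m`: the intersection of `S^m` with an
`m`-dimensional affine subspace of `ℝ^{m+1}`, provided it is infinite. -/
def IsCodimOneSphere (m : ℕ) (S : Set (Euc m)) : Prop :=
  ∃ H : AffineSubspace ℝ (Euc m),
    Module.finrank ℝ H.direction = m ∧ S = unitSphere m ∩ (H : Set (Euc m)) ∧ S.Infinite

/-- Convergence of a sequence of subsets in the Hausdorff distance. -/
def SetsConvergeTo {X : Type*} [MetricSpace X] (K : ℕ → Set X) (L : Set X) : Prop :=
  Filter.Tendsto (fun k => Metric.hausdorffDist (K k) L) Filter.atTop (nhds 0)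

/-- `limsup` of a sequence of sets: `⋂_N closure (⋃_{k ≥ N} S_k)`. -/
def setLimsup {X : Type*} [TopologicalSpace X] (S : ℕ → Set X) : Set X :=
  ⋂ N : ℕ, closure (⋃ k ≥ N, S k)

/-- The weak Koebe–Maskit condition: for every `ε > 0`, only finitely many
connected components of `Ω` have diameter greater than `ε`. -/
def WKM {X : Type*} [MetricSpace X] (Ω : Set X) : Prop :=
  ∀ ε > 0, {U : Set X | (∃ x ∈ Ω, U = connectedComponentIn Ω x) ∧ ε < Metric.diam U}.Finite

/-- `Λ ⊆ S^n` is doubly stable if every `ξ ∈ Λ` lies on a circle `C` such that for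
every sequence of circles converging to `C` the limsup of the slices `C_k ∩ Λ`
contains at least two points. -/
def DoublyStable (n : ℕ) (Λ : Set (Euc n)) : Prop :=
  ∀ ξ ∈ Λ, ∃ C : Set (Euc n), IsCircle n C ∧ ξ ∈ C ∧
    ∀ Ck : ℕ → Set (Euc n), (∀ k, IsCircle n (Ck k)) → SetsConvergeTo Ck C →
      (setLimsup (fun k => Ck k ∩ Λ)).Nontrivial

/-- `v` is tangent to the circle `C` at `ξ`: writing `C` as the sphere of radius
`ρ > 0` about the center `o` inside the 2-plane `P`, the vector `v` lies in the
direction of `P` and is orthogonal to `ξ − o`. -/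
def IsTangentAt (n : ℕ) (v : Euc n) (C : Set (Euc n)) (ξ : Euc n) : Prop :=
  ∃ (P : AffineSubspace ℝ (Euc n)) (o : Euc n) (ρ : ℝ),
    Module.finrank ℝ P.direction = 2 ∧ o ∈ P ∧ 0 < ρ ∧
    C = {x : Euc n | x ∈ P ∧ ‖x - o‖ = ρ} ∧
    v ∈ P.direction ∧ inner ℝ v (ξ - o) = (0 : ℝ)

namespace CircProof

variable {E : Type*} [NormedAddCommGroup E] [InnerProductSpace ℝ E]

/-- Center of the circle cut on the unit sphere by the plane through `z` with
orthonormal direction basis `e1, e2`. -/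
def ctr (z e1 e2 : E) : E := z - ⟪z, e1⟫_ℝ • e1 - ⟪z, e2⟫_ℝ • e2

/-- Radius of that circle. -/
def rad (z e1 e2 : E) : ℝ := Real.sqrt (1 - ‖ctr z e1 e2‖^2)

/-- Parametrized circle. -/
def Circ (z e1 e2 : E) : Set E :=
  {x | ∃ a b : ℝ, a^2 + b^2 = (rad z e1 e2)^2 ∧ x = ctr z e1 e2 + a • e1 + b • e2}

section ON
variable {z e1 e2 : E} (h1 : ‖e1‖ = 1) (h2 : ‖e2‖ = 1) (h12 : ⟪e1, e2⟫_ℝ = 0)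

include h1 h12 in
lemma inner_ctr_e1 : ⟪ctr z e1 e2, e1⟫_ℝ = 0 := by
  have : ⟪e1, e1⟫_ℝ = 1 := by
    rw [real_inner_self_eq_norm_sq, h1]; norm_num
  simp [ctr, inner_sub_left, real_inner_smul_left, this, real_inner_comm e1 e2, h12, h1]

include h2 h12 in
lemma inner_ctr_e2 : ⟪ctr z e1 e2, e2⟫_ℝ = 0 := by
  have : ⟪e2, e2⟫_ℝ = 1 := by
    rw [real_inner_self_eq_norm_sq, h2]; norm_num
  simp [ctr, inner_sub_left, real_inner_smul_left, this, h12, h2]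

include h1 h2 h12 in
lemma norm_comb_sq (a b : ℝ) :
    ‖ctr z e1 e2 + a • e1 + b • e2‖^2 = ‖ctr z e1 e2‖^2 + a^2 + b^2 := by
  have he1 : ⟪e1, e1⟫_ℝ = 1 := by rw [real_inner_self_eq_norm_sq, h1]; norm_num
  have he2 : ⟪e2, e2⟫_ℝ = 1 := by rw [real_inner_self_eq_norm_sq, h2]; norm_num
  have ho1 := inner_ctr_e1 (z := z) (e2 := e2) h1 h12
  have ho2 := inner_ctr_e2 (z := z) (e1 := e1) h2 h12
  set o := ctr z e1 e2
  have : ‖o + a • e1 + b • e2‖^2 = ⟪o + a • e1 + b • e2, o + a • e1 + b • e2⟫_ℝ :=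
    (real_inner_self_eq_norm_sq _).symm
  rw [this]
  simp only [inner_add_add_self, inner_add_left, inner_add_right, real_inner_smul_left,
    real_inner_smul_right, he1, he2, ho1, ho2, real_inner_comm e2 e1, h12]
  rw [real_inner_comm e1 o, real_inner_comm e2 o] at *
  rw [← real_inner_self_eq_norm_sq]
  ring_nf
  rw [real_inner_comm e1 e2, h12, ho1, ho2]
  ring

lemma z_eq : z = ctr z e1 e2 + ⟪z, e1⟫_ℝ • e1 + ⟪z, e2⟫_ℝ • e2 := by
  simp [ctr]; abel

include h1 h2 h12 in
lemma rad_sq (hz : ‖z‖ = 1) : (rad z e1 e2)^2 = 1 - ‖ctr z e1 e2‖^2 := by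
  have hzz := norm_comb_sq (z := z) h1 h2 h12 ⟪z, e1⟫_ℝ ⟪z, e2⟫_ℝ
  rw [← z_eq, hz] at hzz
  rw [rad, Real.sq_sqrt (by nlinarith [sq_nonneg ⟪z, e1⟫_ℝ, sq_nonneg ⟪z, e2⟫_ℝ])]

include h1 h2 h12 in
lemma mem_circ_iff (hz : ‖z‖ = 1) {x : E} :
    x ∈ Circ z e1 e2 ↔ ‖x‖ = 1 ∧ x - z ∈ Submodule.span ℝ ({e1, e2} : Set E) := by
  have hr := rad_sq h1 h2 h12 hz
  have hcomb := norm_comb_sq (z := z) h1 h2 h12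
  constructor
  · rintro ⟨a, b, hab, rfl⟩
    constructor
    · have h := hcomb a b
      nlinarith [norm_nonneg (ctr z e1 e2 + a • e1 + b • e2)]
    · rw [Submodule.mem_span_pair]
      refine ⟨a - ⟪z, e1⟫_ℝ, b - ⟪z, e2⟫_ℝ, ?_⟩
      simp only [ctr]
      module
  · rintro ⟨hx, hsp⟩
    rw [Submodule.mem_span_pair] at hsp
    obtain ⟨s, t, hst⟩ := hsp
    have hxz : x = s • e1 + t • e2 + z := by rw [hst]; abel
    have hxeq : x = ctr z e1 e2 + (s + ⟪z, e1⟫_ℝ) • e1 + (t + ⟪z, e2⟫_ℝ) • e2 := by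
      simp only [ctr]
      rw [hxz]
      module
    refine ⟨s + ⟪z, e1⟫_ℝ, t + ⟪z, e2⟫_ℝ, ?_, hxeq⟩
    have h := hcomb (s + ⟪z, e1⟫_ℝ) (t + ⟪z, e2⟫_ℝ)
    rw [← hxeq, hx] at h
    nlinarith

include h1 h2 h12 in
lemma circ_eq_inter (hz : ‖z‖ = 1) :
    Metric.sphere (0:E) 1 ∩ (AffineSubspace.mk' z (Submodule.span ℝ ({e1, e2} : Set E)) : Set E)
      = Circ z e1 e2 := by
  ext x
  rw [mem_inter_iff, mem_sphere_zero_iff_norm, mem_circ_iff h1 h2 h12 hz,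
    SetLike.mem_coe, AffineSubspace.mem_mk']
  rfl

lemma rad_nonneg : 0 ≤ rad z e1 e2 := Real.sqrt_nonneg _

lemma rad_pos {x y : E} (hx : x ∈ Circ z e1 e2) (hy : y ∈ Circ z e1 e2) (hxy : x ≠ y) :
    0 < rad z e1 e2 := by
  rcases lt_or_eq_of_le (rad_nonneg (z := z) (e1 := e1) (e2 := e2)) with h | h
  · exact h
  · exfalso
    obtain ⟨a, b, hab, rfl⟩ := hx
    obtain ⟨a', b', hab', rfl⟩ := hy
    have ha : a = 0 := by nlinarith
    have hb : b = 0 := by nlinarith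
    have ha' : a' = 0 := by nlinarith
    have hb' : b' = 0 := by nlinarith
    subst ha hb ha' hb'
    exact hxy rfl

include h1 h2 h12 in
lemma orthonormal_pair : Orthonormal ℝ ![e1, e2] := by
  rw [orthonormal_iff_ite]
  intro i j
  fin_cases i <;> fin_cases j <;>
    simp [h12, real_inner_comm e1 e2, real_inner_self_eq_norm_sq, h1, h2]

include h1 h2 h12 in
lemma finrank_span_pair : Module.finrank ℝ (Submodule.span ℝ ({e1, e2} : Set E)) = 2 := by
  have hli := (orthonormal_pair h1 h2 h12).linearIndependent
  have hrange : Set.range ![e1, e2] = {e1, e2} := by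
    simp [Matrix.range_cons, Matrix.range_empty, Set.pair_comm]
  rw [← hrange, finrank_span_eq_card hli, Fintype.card_fin]

include h1 h2 h12 in
lemma plane_eq [FiniteDimensional ℝ E] (P : AffineSubspace ℝ E)
    (hP2 : Module.finrank ℝ P.direction = 2) (hzP : z ∈ P)
    (he1 : e1 ∈ P.direction) (he2 : e2 ∈ P.direction) :
    P = AffineSubspace.mk' z (Submodule.span ℝ ({e1, e2} : Set E)) := by
  have hle : Submodule.span ℝ ({e1, e2} : Set E) ≤ P.direction := by
    rw [Submodule.span_le]
    rintro x hx
    rcases hx with rfl | hx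
    · exact he1
    · rcases hx with rfl; exact he2
  have hdir : Submodule.span ℝ ({e1, e2} : Set E) = P.direction :=
    Submodule.eq_of_le_of_finrank_le hle (by rw [hP2, finrank_span_pair h1 h2 h12])
  refine AffineSubspace.ext_of_direction_eq ?_ ⟨z, hzP, AffineSubspace.self_mem_mk' _ _⟩
  rw [AffineSubspace.direction_mk', hdir]

include h1 h2 h12 in
lemma circle_eq_circ [FiniteDimensional ℝ E] (D : Set E) (P : AffineSubspace ℝ E)
    (hP2 : Module.finrank ℝ P.direction = 2) (hD : D = Metric.sphere (0:E) 1 ∩ (P : Set E))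
    (hzD : z ∈ D) (he1 : e1 ∈ P.direction) (he2 : e2 ∈ P.direction) :
    D = Circ z e1 e2 := by
  have hz : ‖z‖ = 1 := by
    rw [hD] at hzD; exact mem_sphere_zero_iff_norm.mp hzD.1
  rw [hD, plane_eq h1 h2 h12 P hP2 (by rw [hD] at hzD; exact hzD.2) he1 he2,
    circ_eq_inter h1 h2 h12 hz]

end ON

section Haus

variable {z e1 e2 f1 f2 : E}

lemma circ_approx (hr : 0 < rad z e1 e2) (hf1 : ‖f1‖ = 1) (hf2 : ‖f2‖ = 1)
    {x : E} (hx : x ∈ Circ z e1 e2) :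
    ∃ y ∈ Circ z f1 f2, dist x y ≤
      ‖ctr z e1 e2 - ctr z f1 f2‖ + 2 * |rad z e1 e2 - rad z f1 f2|
        + (rad z e1 e2 + rad z f1 f2) * (‖e1 - f1‖ + ‖e2 - f2‖) := by
  obtain ⟨a, b, hab, rfl⟩ := hx
  set r := rad z e1 e2 with hrdef
  set r' := rad z f1 f2 with hrdef'
  set o := ctr z e1 e2 with hodef
  set o' := ctr z f1 f2 with hodef'
  have hr'0 : 0 ≤ r' := Real.sqrt_nonneg _
  set a' := (r'/r) * a with ha'
  set b' := (r'/r) * b with hb'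
  have hmem : o' + a' • f1 + b' • f2 ∈ Circ z f1 f2 := by
    refine ⟨a', b', ?_, rfl⟩
    rw [ha', hb']
    field_simp
    nlinarith
  refine ⟨_, hmem, ?_⟩
  have habs : |a| ≤ r := by
    have h1 : a^2 ≤ r^2 := by nlinarith
    calc |a| = Real.sqrt (a^2) := (Real.sqrt_sq_eq_abs a).symm
    _ ≤ Real.sqrt (r^2) := Real.sqrt_le_sqrt h1
    _ = r := Real.sqrt_sq hr.le
  have hbbs : |b| ≤ r := by
    have h1 : b^2 ≤ r^2 := by nlinarith
    calc |b| = Real.sqrt (b^2) := (Real.sqrt_sq_eq_abs b).symm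
    _ ≤ Real.sqrt (r^2) := Real.sqrt_le_sqrt h1
    _ = r := Real.sqrt_sq hr.le
  have haa' : |a - a'| ≤ |r - r'| := by
    have h1 : a - a' = a * (r - r') / r := by rw [ha']; field_simp
    rw [h1, abs_div, abs_mul, abs_of_pos hr]
    calc |a| * |r - r'| / r ≤ r * |r - r'| / r := by gcongr
    _ = |r - r'| := by field_simp
  have hbb' : |b - b'| ≤ |r - r'| := by
    have h1 : b - b' = b * (r - r') / r := by rw [hb']; field_simp
    rw [h1, abs_div, abs_mul, abs_of_pos hr]
    calc |b| * |r - r'| / r ≤ r * |r - r'| / r := by gcongr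
    _ = |r - r'| := by field_simp
  have key : (o + a • e1 + b • e2) - (o' + a' • f1 + b' • f2)
      = (o - o') + (a • (e1 - f1) + (a - a') • f1) + (b • (e2 - f2) + (b - b') • f2) := by
    module
  rw [dist_eq_norm, key]
  have t1 : ‖a • (e1 - f1) + (a - a') • f1‖ ≤ r * ‖e1 - f1‖ + |r - r'| := by
    calc ‖a • (e1 - f1) + (a - a') • f1‖ ≤ ‖a • (e1 - f1)‖ + ‖(a - a') • f1‖ := norm_add_le _ _
    _ = |a| * ‖e1 - f1‖ + |a - a'| * ‖f1‖ := by rw [norm_smul, norm_smul]; rfl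
    _ ≤ r * ‖e1 - f1‖ + |r - r'| := by
        rw [hf1, mul_one]
        gcongr
  have t2 : ‖b • (e2 - f2) + (b - b') • f2‖ ≤ r * ‖e2 - f2‖ + |r - r'| := by
    calc ‖b • (e2 - f2) + (b - b') • f2‖ ≤ ‖b • (e2 - f2)‖ + ‖(b - b') • f2‖ := norm_add_le _ _
    _ = |b| * ‖e2 - f2‖ + |b - b'| * ‖f2‖ := by rw [norm_smul, norm_smul]; rfl
    _ ≤ r * ‖e2 - f2‖ + |r - r'| := by
        rw [hf2, mul_one]
        gcongr
  calc ‖(o - o') + (a • (e1 - f1) + (a - a') • f1) + (b • (e2 - f2) + (b - b') • f2)‖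
      ≤ ‖o - o'‖ + ‖a • (e1 - f1) + (a - a') • f1‖ + ‖b • (e2 - f2) + (b - b') • f2‖ :=
        norm_add₃_le
    _ ≤ ‖o - o'‖ + (r * ‖e1 - f1‖ + |r - r'|) + (r * ‖e2 - f2‖ + |r - r'|) := by
        gcongr
    _ ≤ ‖o - o'‖ + 2 * |r - r'| + (r + r') * (‖e1 - f1‖ + ‖e2 - f2‖) := by
        nlinarith [mul_nonneg hr'0 (norm_nonneg (e1 - f1)), mul_nonneg hr'0 (norm_nonneg (e2 - f2))]

lemma hausdorff_circ_le (h1 : ‖e1‖ = 1) (h2 : ‖e2‖ = 1) (hf1 : ‖f1‖ = 1) (hf2 : ‖f2‖ = 1)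
    (hr : 0 < rad z e1 e2) (hr' : 0 < rad z f1 f2) :
    hausdorffDist (Circ z e1 e2) (Circ z f1 f2) ≤
      ‖ctr z e1 e2 - ctr z f1 f2‖ + 2 * |rad z e1 e2 - rad z f1 f2|
        + (rad z e1 e2 + rad z f1 f2) * (‖e1 - f1‖ + ‖e2 - f2‖) := by
  have hBnn : (0:ℝ) ≤ ‖ctr z e1 e2 - ctr z f1 f2‖ + 2 * |rad z e1 e2 - rad z f1 f2|
        + (rad z e1 e2 + rad z f1 f2) * (‖e1 - f1‖ + ‖e2 - f2‖) := by
    have := Real.sqrt_nonneg (1 - ‖ctr z e1 e2‖^2)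
    have h3 : 0 ≤ rad z e1 e2 + rad z f1 f2 := by
      have := Real.sqrt_nonneg (1 - ‖ctr z f1 f2‖^2)
      rw [rad, rad]; positivity
    positivity
  refine hausdorffDist_le_of_mem_dist hBnn ?_ ?_
  · intro x hx
    exact circ_approx hr hf1 hf2 hx
  · intro y hy
    obtain ⟨x, hx, hd⟩ := circ_approx hr' h1 h2 hy
    refine ⟨x, hx, ?_⟩
    calc dist y x ≤ ‖ctr z f1 f2 - ctr z e1 e2‖ + 2 * |rad z f1 f2 - rad z e1 e2|
        + (rad z f1 f2 + rad z e1 e2) * (‖f1 - e1‖ + ‖f2 - e2‖) := hd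
    _ = ‖ctr z e1 e2 - ctr z f1 f2‖ + 2 * |rad z e1 e2 - rad z f1 f2|
        + (rad z e1 e2 + rad z f1 f2) * (‖e1 - f1‖ + ‖e2 - f2‖) := by
        rw [norm_sub_rev, abs_sub_comm, norm_sub_rev f1, norm_sub_rev f2, add_comm (rad z f1 f2)]

end Haus

section GS

variable {u1 u2 x : E}

/-- Normalization. -/
def nzd (x : E) : E := ‖x‖⁻¹ • x

/-- Gram–Schmidt second vector (before normalization). -/
def gsw (u1 u2 : E) : E := u2 - ⟪u2, nzd u1⟫_ℝ • nzd u1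

lemma norm_nzd (hx : x ≠ 0) : ‖nzd x‖ = 1 := norm_smul_inv_norm (𝕜 := ℝ) hx

lemma inner_nzd_gsw (hu1 : u1 ≠ 0) : ⟪nzd u1, gsw u1 u2⟫_ℝ = 0 := by
  have h : ⟪nzd u1, nzd u1⟫_ℝ = 1 := by
    rw [real_inner_self_eq_norm_sq, norm_nzd hu1]; norm_num
  rw [gsw, inner_sub_right, real_inner_smul_right, h, real_inner_comm]
  ring

lemma inner_nzd_nzd_gsw (hu1 : u1 ≠ 0) (u2 : E) : ⟪nzd u1, nzd (gsw u1 u2)⟫_ℝ = 0 := by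
  rw [show nzd (gsw u1 u2) = ‖gsw u1 u2‖⁻¹ • gsw u1 u2 from rfl, real_inner_smul_right, inner_nzd_gsw hu1, mul_zero]

lemma tendsto_nzd {f : ℕ → E} (hf : Filter.Tendsto f Filter.atTop (nhds x)) (hx : x ≠ 0) :
    Filter.Tendsto (fun k => nzd (f k)) Filter.atTop (nhds (nzd x)) :=
  Filter.Tendsto.smul (hf.norm.inv₀ (norm_ne_zero_iff.mpr hx)) hf

end GS

lemma inj3 {α : Type*} {p q r : α} (hpq : p ≠ q) (hpr : p ≠ r) (hqr : q ≠ r) :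
    Function.Injective ![p, q, r] := by
  intro i j hij
  fin_cases i <;> fin_cases j <;>
    simp only [Matrix.cons_val_zero, Matrix.cons_val_one, Matrix.head_cons,
      Matrix.cons_val_two, Matrix.tail_cons] at hij ⊢ <;>
    first
      | rfl
      | exact absurd hij hpq | exact absurd hij hpr | exact absurd hij hqr
      | exact absurd hij.symm hpq | exact absurd hij.symm hpr | exact absurd hij.symm hqr

end CircProof


/-- If `b_k, c_k → ξ` with `(c_k − b_k)/‖c_k − b_k‖ → v`, and `C_k` is the circle
through the pairwise distinct points `z, b_k, c_k`, then `C_k` converges in the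
Hausdorff distance to the unique circle through `z` and `ξ` tangent to `v` at `ξ`. -/
theorem circles_tendsto_tangent_circle
    (n : ℕ) (hn : 2 ≤ n) (ξ v z : Euc n)
    (hξ : ξ ∈ unitSphere n) (hv : ‖v‖ = 1) (hvξ : inner ℝ v ξ = (0 : ℝ))
    (hz : z ∈ unitSphere n) (hzξ : z ≠ ξ)
    (b c : ℕ → Euc n) (hb : ∀ k, b k ∈ unitSphere n) (hc : ∀ k, c k ∈ unitSphere n)
    (hdist : ∀ k, z ≠ b k ∧ z ≠ c k ∧ b k ≠ c k)
    (hbξ : Filter.Tendsto b Filter.atTop (nhds ξ))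
    (hcξ : Filter.Tendsto c Filter.atTop (nhds ξ))
    (hdir : Filter.Tendsto (fun k => ‖c k - b k‖⁻¹ • (c k - b k))
      Filter.atTop (nhds v))
    (Ck : ℕ → Set (Euc n))
    (hCk : ∀ k, IsCircle n (Ck k) ∧ z ∈ Ck k ∧ b k ∈ Ck k ∧ c k ∈ Ck k)
    (C : Set (Euc n)) (hC : IsCircle n C) (hξC : ξ ∈ C) (hzC : z ∈ C)
    (htan : IsTangentAt n v C ξ) :
    SetsConvergeTo Ck C := by
  classical
  have hξn : ‖ξ‖ = 1 := mem_sphere_zero_iff_norm.mp hξ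
  have hzn : ‖z‖ = 1 := mem_sphere_zero_iff_norm.mp hz
  have hξz : ξ - z ≠ 0 := sub_ne_zero.mpr (Ne.symm hzξ)
  set E1 : Euc n := CircProof.nzd (ξ - z) with hE1def
  set Wv : Euc n := CircProof.gsw (ξ - z) v with hWdef
  have hE1n : ‖E1‖ = 1 := CircProof.norm_nzd hξz
  have hE1eq : E1 = ‖ξ - z‖⁻¹ • (ξ - z) := rfl
  -- `Wv ≠ 0`
  have hWv : Wv ≠ 0 := by
    intro h0
    rw [hWdef, CircProof.gsw] at h0
    have hveq : v = ⟪v, E1⟫_ℝ • E1 := sub_eq_zero.mp h0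
    have hinner : ⟪ξ - z, ξ⟫_ℝ = 1 - ⟪z, ξ⟫_ℝ := by
      rw [inner_sub_left]
      have h5 : ⟪ξ, ξ⟫_ℝ = 1 := by rw [real_inner_self_eq_norm_sq, hξn]; norm_num
      rw [h5]
    have hpos : 0 < 1 - ⟪z, ξ⟫_ℝ := by
      have h2 : ‖z - ξ‖^2 = 2 - 2*⟪z, ξ⟫_ℝ := by
        rw [norm_sub_sq_real, hzn, hξn]; ring
      have h4 : (0:ℝ) < ‖z - ξ‖ := norm_pos_iff.mpr (sub_ne_zero.mpr hzξ)
      nlinarith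
    have hc0 : ⟪v, E1⟫_ℝ ≠ 0 := by
      intro h
      rw [h, zero_smul] at hveq
      rw [hveq, norm_zero] at hv
      norm_num at hv
    have hvE1 : ⟪v, ξ⟫_ℝ = ⟪v, E1⟫_ℝ * (‖ξ - z‖⁻¹ * (1 - ⟪z, ξ⟫_ℝ)) := by
      conv_lhs => rw [hveq]
      rw [real_inner_smul_left, hE1eq, real_inner_smul_left, hinner]
    have hne : ⟪v, ξ⟫_ℝ ≠ 0 := by
      rw [hvE1]
      exact mul_ne_zero hc0 (mul_ne_zero (inv_ne_zero (norm_ne_zero_iff.mpr hξz)) (ne_of_gt hpos))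
    exact hne hvξ
  set E2 : Euc n := CircProof.nzd Wv with hE2def
  have hE2n : ‖E2‖ = 1 := CircProof.norm_nzd hWv
  have hE12 : ⟪E1, E2⟫_ℝ = 0 := CircProof.inner_nzd_nzd_gsw hξz v
  -- the limit circle is `Circ z E1 E2`
  obtain ⟨Pinf, hP2inf, hCeq, hCinf⟩ := hC
  have hzPC : z ∈ Pinf := by have := hzC; rw [hCeq] at this; exact this.2
  have hξPC : ξ ∈ Pinf := by have := hξC; rw [hCeq] at this; exact this.2
  have hE1dir : E1 ∈ Pinf.direction := by
    apply Submodule.smul_mem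
    have := AffineSubspace.vsub_mem_direction hξPC hzPC
    rwa [vsub_eq_sub] at this
  obtain ⟨P', o', ρ, hP'2, -, -, hCset, hvdir, -⟩ := htan
  have hCsubP' : C ⊆ (P' : Set (Euc n)) := by rw [hCset]; exact fun x hx => hx.1
  have hCsubPinf : C ⊆ (Pinf : Set (Euc n)) := by rw [hCeq]; exact fun x hx => hx.2
  have hfin : ({z, ξ} : Set (Euc n)).Finite := (Set.finite_singleton ξ).insert z
  obtain ⟨p3, hp3⟩ := (hCinf.diff hfin).nonempty
  have hp3C : p3 ∈ C := hp3.1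
  have hp3z : p3 ≠ z := fun h => hp3.2 (by rw [h]; exact Set.mem_insert _ _)
  have hp3ξ : p3 ≠ ξ := fun h => hp3.2 (by rw [h]; exact Set.mem_insert_of_mem _ rfl)
  have hcosph : EuclideanGeometry.Cospherical C := by
    refine ⟨0, 1, fun p hp => ?_⟩
    rw [hCeq] at hp
    rw [dist_zero_right]
    exact mem_sphere_zero_iff_norm.mp hp.1
  have hrangesub : Set.range ![z, ξ, p3] ⊆ C := by
    intro x hx
    obtain ⟨i, rfl⟩ := hx
    fin_cases i
    · exact hzC
    · exact hξC
    · exact hp3C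
  have hAI : AffineIndependent ℝ ![z, ξ, p3] := by
    exact hcosph.affineIndependent hrangesub
      (CircProof.inj3 hzξ (Ne.symm hp3z) (Ne.symm hp3ξ))
  have hfr : Module.finrank ℝ (vectorSpan ℝ (Set.range ![z, ξ, p3])) = 2 :=
    hAI.finrank_vectorSpan (by simp)
  have key : ∀ Q : AffineSubspace ℝ (Euc n), Module.finrank ℝ Q.direction = 2 →
      C ⊆ (Q : Set (Euc n)) → vectorSpan ℝ (Set.range ![z, ξ, p3]) = Q.direction := by
    intro Q h2 hsub
    apply Submodule.eq_of_le_of_finrank_le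
    · rw [vectorSpan_def, Submodule.span_le]
      rintro x ⟨p, hp, q, hq, rfl⟩
      exact AffineSubspace.vsub_mem_direction (hsub (hrangesub hp)) (hsub (hrangesub hq))
    · rw [h2, hfr]
  have hdir' : P'.direction = Pinf.direction := by
    rw [← key P' hP'2 hCsubP', key Pinf hP2inf hCsubPinf]
  have hvPinf : v ∈ Pinf.direction := hdir' ▸ hvdir
  have hE2dir : E2 ∈ Pinf.direction := by
    apply Submodule.smul_mem
    rw [hWdef, CircProof.gsw]
    exact Submodule.sub_mem _ hvPinf (Submodule.smul_mem _ _ hE1dir)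
  have hCcirc : C = CircProof.Circ z E1 E2 :=
    CircProof.circle_eq_circ hE1n hE2n hE12 C Pinf hP2inf hCeq hzC hE1dir hE2dir
  -- the circles `Ck`
  set e1 : ℕ → Euc n := fun k => CircProof.nzd (b k - z) with he1def
  set u2 : ℕ → Euc n := fun k => ‖c k - b k‖⁻¹ • (c k - b k) with hu2def
  set w : ℕ → Euc n := fun k => CircProof.gsw (b k - z) (u2 k) with hwdef
  set e2 : ℕ → Euc n := fun k => CircProof.nzd (w k) with he2def
  have hbz : ∀ k, b k - z ≠ 0 := fun k => sub_ne_zero.mpr (Ne.symm (hdist k).1)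
  have hcb : ∀ k, c k - b k ≠ 0 := fun k => sub_ne_zero.mpr ((hdist k).2.2.symm)
  have hwk : ∀ k, w k ≠ 0 := by
    intro k h0
    have hcosphk : EuclideanGeometry.Cospherical (Set.range ![z, b k, c k]) := by
      refine ⟨0, 1, fun p hp => ?_⟩
      obtain ⟨i, rfl⟩ := hp
      rw [dist_zero_right]
      fin_cases i
      · exact hzn
      · exact mem_sphere_zero_iff_norm.mp (hb k)
      · exact mem_sphere_zero_iff_norm.mp (hc k)
    have hAIk : AffineIndependent ℝ ![z, b k, c k] := by
      exact hcosphk.affineIndependent Set.Subset.rfl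
        (CircProof.inj3 (hdist k).1 (hdist k).2.1 (hdist k).2.2)
    rw [affineIndependent_iff_not_collinear] at hAIk
    apply hAIk
    rw [collinear_iff_exists_forall_eq_smul_vadd]
    refine ⟨z, b k - z, ?_⟩
    have h1 : u2 k = ⟪u2 k, e1 k⟫_ℝ • e1 k := by
      have h0' : u2 k - ⟪u2 k, e1 k⟫_ℝ • e1 k = 0 := h0
      exact sub_eq_zero.mp h0'
    have h2 : c k - b k = ‖c k - b k‖ • u2 k := by
      show c k - b k = ‖c k - b k‖ • (‖c k - b k‖⁻¹ • (c k - b k))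
      rw [smul_smul, mul_inv_cancel₀ (norm_ne_zero_iff.mpr (hcb k)), one_smul]
    set t : ℝ := ‖c k - b k‖ * (⟪u2 k, e1 k⟫_ℝ * ‖b k - z‖⁻¹) with htdef
    have he1smul : ∀ s : ℝ, s • e1 k = (s * ‖b k - z‖⁻¹) • (b k - z) := by
      intro s
      rw [show e1 k = ‖b k - z‖⁻¹ • (b k - z) from rfl, smul_smul]
    have hcbk : c k - b k = t • (b k - z) := by
      rw [h2]
      nth_rewrite 1 [h1]
      rw [smul_smul, he1smul]
      congr 1
      rw [htdef]
      ring
    intro p hp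
    obtain ⟨i, rfl⟩ := hp
    fin_cases i
    · refine ⟨0, ?_⟩
      show z = (0:ℝ) • (b k - z) +ᵥ z
      simp
    · refine ⟨1, ?_⟩
      show b k = (1:ℝ) • (b k - z) +ᵥ z
      rw [one_smul, vadd_eq_add]
      abel
    · refine ⟨t + 1, ?_⟩
      show c k = (t + 1) • (b k - z) +ᵥ z
      rw [vadd_eq_add, add_smul, one_smul, ← hcbk]
      abel
  have he1n : ∀ k, ‖e1 k‖ = 1 := fun k => CircProof.norm_nzd (hbz k)
  have he2n : ∀ k, ‖e2 k‖ = 1 := fun k => CircProof.norm_nzd (hwk k)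
  have he12 : ∀ k, ⟪e1 k, e2 k⟫_ℝ = 0 := fun k => CircProof.inner_nzd_nzd_gsw (hbz k) (u2 k)
  have hCkcirc : ∀ k, Ck k = CircProof.Circ z (e1 k) (e2 k) := by
    intro k
    obtain ⟨⟨P, hP2, hPeq, -⟩, hzk, hbk, hck⟩ := hCk k
    have hzP : z ∈ P := by rw [hPeq] at hzk; exact hzk.2
    have hbP : b k ∈ P := by rw [hPeq] at hbk; exact hbk.2
    have hcP : c k ∈ P := by rw [hPeq] at hck; exact hck.2
    have hd1 : b k - z ∈ P.direction := by
      have := AffineSubspace.vsub_mem_direction hbP hzP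
      rwa [vsub_eq_sub] at this
    have hd2 : c k - b k ∈ P.direction := by
      have := AffineSubspace.vsub_mem_direction hcP hbP
      rwa [vsub_eq_sub] at this
    refine CircProof.circle_eq_circ (he1n k) (he2n k) (he12 k) _ P hP2 hPeq hzk ?_ ?_
    · exact Submodule.smul_mem _ _ hd1
    · apply Submodule.smul_mem
      show u2 k - ⟪u2 k, e1 k⟫_ℝ • e1 k ∈ P.direction
      refine Submodule.sub_mem _ ?_ (Submodule.smul_mem _ _ (Submodule.smul_mem _ _ hd1))
      exact Submodule.smul_mem _ _ hd2
  -- radii are positive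
  have hrpos : 0 < CircProof.rad z E1 E2 :=
    CircProof.rad_pos (hCcirc ▸ hzC) (hCcirc ▸ hξC) hzξ
  have hrposk : ∀ k, 0 < CircProof.rad z (e1 k) (e2 k) := fun k =>
    CircProof.rad_pos ((hCkcirc k) ▸ (hCk k).2.1) ((hCkcirc k) ▸ (hCk k).2.2.1) (hdist k).1
  -- convergence of the frames
  have htb : Filter.Tendsto (fun k => b k - z) Filter.atTop (nhds (ξ - z)) :=
    hbξ.sub tendsto_const_nhds
  have hte1 : Filter.Tendsto e1 Filter.atTop (nhds E1) := CircProof.tendsto_nzd htb hξz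
  have htu2 : Filter.Tendsto u2 Filter.atTop (nhds v) := hdir
  have htw : Filter.Tendsto w Filter.atTop (nhds Wv) := by
    have : Filter.Tendsto (fun k => u2 k - ⟪u2 k, e1 k⟫_ℝ • e1 k) Filter.atTop
        (nhds (v - ⟪v, E1⟫_ℝ • E1)) := htu2.sub ((htu2.inner hte1).smul hte1)
    exact this
  have hte2 : Filter.Tendsto e2 Filter.atTop (nhds E2) := CircProof.tendsto_nzd htw hWv
  have hto : Filter.Tendsto (fun k => CircProof.ctr z (e1 k) (e2 k)) Filter.atTop
      (nhds (CircProof.ctr z E1 E2)) := by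
    simp only [CircProof.ctr]
    exact (tendsto_const_nhds.sub ((tendsto_const_nhds.inner hte1).smul hte1)).sub
      ((tendsto_const_nhds.inner hte2).smul hte2)
  have htr : Filter.Tendsto (fun k => CircProof.rad z (e1 k) (e2 k)) Filter.atTop
      (nhds (CircProof.rad z E1 E2)) := by
    simp only [CircProof.rad]
    exact (tendsto_const_nhds.sub (hto.norm.pow 2)).sqrt
  -- squeeze
  have htD : Filter.Tendsto (fun k =>
      ‖CircProof.ctr z (e1 k) (e2 k) - CircProof.ctr z E1 E2‖
      + 2 * |CircProof.rad z (e1 k) (e2 k) - CircProof.rad z E1 E2|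
      + (CircProof.rad z (e1 k) (e2 k) + CircProof.rad z E1 E2) * (‖e1 k - E1‖ + ‖e2 k - E2‖))
      Filter.atTop (nhds 0) := by
    have h1 : Filter.Tendsto
        (fun k => ‖CircProof.ctr z (e1 k) (e2 k) - CircProof.ctr z E1 E2‖)
        Filter.atTop (nhds ‖CircProof.ctr z E1 E2 - CircProof.ctr z E1 E2‖) :=
      (hto.sub tendsto_const_nhds).norm
    have h2 : Filter.Tendsto
        (fun k => 2 * |CircProof.rad z (e1 k) (e2 k) - CircProof.rad z E1 E2|)
        Filter.atTop (nhds (2 * |CircProof.rad z E1 E2 - CircProof.rad z E1 E2|)) :=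
      ((htr.sub tendsto_const_nhds).abs).const_mul (2:ℝ)
    have h1e : Filter.Tendsto (fun k => ‖e1 k - E1‖) Filter.atTop (nhds ‖E1 - E1‖) :=
      (hte1.sub tendsto_const_nhds).norm
    have h2e : Filter.Tendsto (fun k => ‖e2 k - E2‖) Filter.atTop (nhds ‖E2 - E2‖) :=
      (hte2.sub tendsto_const_nhds).norm
    have h3 : Filter.Tendsto
        (fun k => (CircProof.rad z (e1 k) (e2 k) + CircProof.rad z E1 E2)
          * (‖e1 k - E1‖ + ‖e2 k - E2‖))
        Filter.atTop (nhds ((CircProof.rad z E1 E2 + CircProof.rad z E1 E2)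
          * (‖E1 - E1‖ + ‖E2 - E2‖))) :=
      (htr.add tendsto_const_nhds).mul (h1e.add h2e)
    have h4 := (h1.add h2).add h3
    simpa using h4
  show Filter.Tendsto (fun k => Metric.hausdorffDist (Ck k) C) Filter.atTop (nhds 0)
  refine squeeze_zero (fun k => hausdorffDist_nonneg) (fun k => ?_) htD
  rw [hCkcirc k, hCcirc]
  exact CircProof.hausdorff_circ_le (he1n k) (he2n k) hE1n hE2n (hrposk k) hrpos
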